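/- Let h(χ) = -log σ_k(χ^{-1}) on the positive orthant Γ_n. Then h is concave on Γ_n. -/

import Mathlib

open Finset

/-- The `k`-th elementary symmetric polynomial in `n` real variables. -/
noncomputable def esymm (n k : ℕ) (x : Fin n → ℝ) : ℝ :=
  ∑ s ∈ Finset.univ.powersetCard k, ∏ i ∈ s, x i

/-- The `k`-th elementary symmetric polynomial of the variables with the
`i`-th one removed. -/
noncomputable def esymmOmit (n k : ℕ) (x : Fin n → ℝ) (i : Fin n) : ℝ :=
  ∑ s ∈ (Finset.univ.erase i).powersetCard k, ∏ j ∈ s, x j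

/-- The `i`-th partial derivative of a function of `n` real variables. -/
noncomputable def pd (n : ℕ) (g : (Fin n → ℝ) → ℝ) (i : Fin n) (χ : Fin n → ℝ) : ℝ :=
  fderiv ℝ g χ (Pi.single i 1)

/-- The positive orthant `Γ_n`. -/
def Gamma (n : ℕ) : Set (Fin n → ℝ) := {χ | ∀ i, 0 < χ i}

section aux

variable {E : Type*} [AddCommGroup E] [Module ℝ E]

/-- Hölder's inequality in power-mean form. -/
lemma hoelder_pow {ι : Type*} (t : Finset ι) (f g : ι → ℝ) (hf : ∀ i ∈ t, 0 ≤ f i)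
    (hg : ∀ i ∈ t, 0 ≤ g i) {a b : ℝ} (ha : 0 < a) (hb : 0 < b) (hab : a + b = 1) :
    ∑ i ∈ t, f i ^ a * g i ^ b ≤ (∑ i ∈ t, f i) ^ a * (∑ i ∈ t, g i) ^ b := by
  have ha1 : a < 1 := by linarith
  have hpq : Real.HolderConjugate (1 / a) (1 / b) := by
    constructor
    · rw [one_div, inv_inv, one_div, inv_inv, inv_one]; exact hab
    · positivity
    · positivity
  have := Real.inner_le_Lp_mul_Lq t (fun i => f i ^ a) (fun i => g i ^ b) hpq
  simp only [one_div, inv_inv] at this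
  calc ∑ i ∈ t, f i ^ a * g i ^ b
      ≤ (∑ i ∈ t, |f i ^ a| ^ (1 / a)) ^ a * (∑ i ∈ t, |g i ^ b| ^ (1 / b)) ^ b := by
        simpa [one_div] using this
    _ = (∑ i ∈ t, f i) ^ a * (∑ i ∈ t, g i) ^ b := by
        congr 1
        · congr 1
          refine Finset.sum_congr rfl fun i hi => ?_
          rw [abs_of_nonneg (Real.rpow_nonneg (hf i hi) a), ← Real.rpow_mul (hf i hi),
            mul_one_div, div_self ha.ne', Real.rpow_one]
        · congr 1
          refine Finset.sum_congr rfl fun i hi => ?_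
          rw [abs_of_nonneg (Real.rpow_nonneg (hg i hi) b), ← Real.rpow_mul (hg i hi),
            mul_one_div, div_self hb.ne', Real.rpow_one]

/-- A finite sum of convex functions is convex. -/
lemma convexOn_finset_sum {ι : Type*} (t : Finset ι) {S : Set E} (hS : Convex ℝ S)
    {f : ι → E → ℝ} (h : ∀ i ∈ t, ConvexOn ℝ S (f i)) :
    ConvexOn ℝ S (fun x => ∑ i ∈ t, f i x) := by
  classical
  induction t using Finset.induction_on with
  | empty => simpa using convexOn_const 0 hS
  | @insert a s hnot ih =>
    simp only [Finset.sum_insert hnot]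
    exact (h a (Finset.mem_insert_self a s)).add
      (ih fun i hi => h i (Finset.mem_insert_of_mem hi))

/-- Log-sum-exp of convex functions is convex. -/
lemma convexOn_log_sum_exp {ι : Type*} (t : Finset ι) (ht : t.Nonempty) {S : Set E}
    (hS : Convex ℝ S) {u : ι → E → ℝ} (hu : ∀ i ∈ t, ConvexOn ℝ S (u i)) :
    ConvexOn ℝ S (fun x => Real.log (∑ i ∈ t, Real.exp (u i x))) := by
  refine ⟨hS, fun x hx y hy a b ha hb hab => ?_⟩
  rcases ha.eq_or_lt with rfl | ha
  · have hb1 : b = 1 := by linarith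
    subst hb1; simp
  rcases hb.eq_or_lt with rfl | hb
  · have ha1 : a = 1 := by linarith
    subst ha1; simp
  have hApos : 0 < ∑ i ∈ t, Real.exp (u i x) :=
    Finset.sum_pos (fun i _ => Real.exp_pos _) ht
  have hBpos : 0 < ∑ i ∈ t, Real.exp (u i y) :=
    Finset.sum_pos (fun i _ => Real.exp_pos _) ht
  have hCpos : 0 < ∑ i ∈ t, Real.exp (u i (a • x + b • y)) :=
    Finset.sum_pos (fun i _ => Real.exp_pos _) ht
  have step1 : ∑ i ∈ t, Real.exp (u i (a • x + b • y)) ≤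
      ∑ i ∈ t, Real.exp (u i x) ^ a * Real.exp (u i y) ^ b := by
    refine Finset.sum_le_sum fun i hi => ?_
    have h1 : u i (a • x + b • y) ≤ a * u i x + b * u i y := by
      simpa [smul_eq_mul] using (hu i hi).2 hx hy ha.le hb.le hab
    calc Real.exp (u i (a • x + b • y)) ≤ Real.exp (a * u i x + b * u i y) :=
          Real.exp_le_exp.2 h1
      _ = Real.exp (u i x) ^ a * Real.exp (u i y) ^ b := by
          rw [Real.exp_add, ← Real.exp_log (Real.rpow_pos_of_pos (Real.exp_pos _) a),
            ← Real.exp_log (Real.rpow_pos_of_pos (Real.exp_pos _) b),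
            Real.log_rpow (Real.exp_pos _), Real.log_rpow (Real.exp_pos _),
            Real.log_exp, Real.log_exp]
  have step2 : ∑ i ∈ t, Real.exp (u i x) ^ a * Real.exp (u i y) ^ b ≤
      (∑ i ∈ t, Real.exp (u i x)) ^ a * (∑ i ∈ t, Real.exp (u i y)) ^ b :=
    hoelder_pow t _ _ (fun i _ => (Real.exp_pos _).le) (fun i _ => (Real.exp_pos _).le)
      ha hb hab
  calc Real.log (∑ i ∈ t, Real.exp (u i (a • x + b • y)))
      ≤ Real.log ((∑ i ∈ t, Real.exp (u i x)) ^ a * (∑ i ∈ t, Real.exp (u i y)) ^ b) :=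
        Real.log_le_log hCpos (step1.trans step2)
    _ = a • Real.log (∑ i ∈ t, Real.exp (u i x)) +
        b • Real.log (∑ i ∈ t, Real.exp (u i y)) := by
        rw [Real.log_mul (Real.rpow_pos_of_pos hApos a).ne'
          (Real.rpow_pos_of_pos hBpos b).ne', Real.log_rpow hApos, Real.log_rpow hBpos]
        simp [smul_eq_mul]

end aux

lemma gamma_convex (n : ℕ) : Convex ℝ (Gamma n) := by
  have : Gamma n = Set.univ.pi fun _ : Fin n => Set.Ioi (0 : ℝ) := by
    ext χ; simp [Gamma, Set.mem_pi]
  rw [this]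
  exact convex_pi fun i _ => convex_Ioi 0

/-- `h(χ) = -log σ_k(χ⁻¹)` is concave on the positive orthant `Γ_n`. -/
theorem stmt9 (n k : ℕ) (hk1 : 1 ≤ k) (hkn : k ≤ n) :
    ConcaveOn ℝ (Gamma n)
      (fun χ => -Real.log (esymm n k (fun i => (χ i)⁻¹))) := by
  classical
  set t : Finset (Finset (Fin n)) := Finset.univ.powersetCard k with ht_def
  have ht : t.Nonempty := by
    rw [ht_def, Finset.powersetCard_nonempty]
    simpa using hkn
  set u : Finset (Fin n) → (Fin n → ℝ) → ℝ := fun s χ => ∑ i ∈ s, -Real.log (χ i) with hu_def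
  have hu : ∀ s ∈ t, ConvexOn ℝ (Gamma n) (u s) := by
    intro s _
    refine convexOn_finset_sum s (gamma_convex n) fun i _ => ?_
    have hlog : ConvexOn ℝ (Set.Ioi (0 : ℝ)) (fun x => -Real.log x) :=
      strictConcaveOn_log_Ioi.concaveOn.neg
    have := hlog.comp_affineMap ((LinearMap.proj i : (Fin n → ℝ) →ₗ[ℝ] ℝ).toAffineMap)
    refine ConvexOn.subset this ?_ (gamma_convex n)
    intro χ hχ
    exact hχ i
  have hconv := convexOn_log_sum_exp t ht (gamma_convex n) hu
  have hconc : ConcaveOn ℝ (Gamma n)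
      (fun χ => -Real.log (∑ s ∈ t, Real.exp (u s χ))) := hconv.neg
  refine hconc.congr fun χ hχ => ?_
  beta_reduce
  congr 1
  congr 1
  rw [esymm]
  refine Finset.sum_congr rfl fun s _ => ?_
  rw [hu_def, Real.exp_sum]
  refine (Finset.prod_congr rfl fun i _ => ?_).symm
  rw [Real.exp_neg, Real.exp_log (hχ i)]
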